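/- (Existence and uniqueness for trivial kneading sequence.) Let p ≥ 1 and let c₁,…,c_{p−1} ∈ ℂ satisfy c_{j+1} = c_j² + c₁ for 1 ≤ j < p, where c_p := 0 (so that 0 ↦ c₁ ↦ ⋯ ↦ c_{p−1} ↦ 0 is a period-p critical orbit of the quadratic map z ↦ z² + c₁). Take μ = 1, so that the escape-region equations read X²·(u_{j+1} − u₁) = u_j²·(u_j − 1) in ℂ[[X]]. Then there exists exactly one solution (u₁,…,u_p) (with u_p = 0) such that each u_j is supported in even degrees (a power series in X²) and u_j ≡ −c_j·X² (mod X⁴). Moreover every coefficient of every u_j lies in the subfield ℚ(c₁) ⊆ ℂ. -/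

import Mathlib

/-- `f` has leading term (leading monomial) `β·X^q`: the coefficient of `X^q` is `β ≠ 0`
and all lower coefficients vanish. -/
def HasLeadingTerm (f : PowerSeries ℂ) (β : ℂ) (q : ℕ) : Prop :=
  β ≠ 0 ∧ PowerSeries.coeff q f = β ∧ ∀ n < q, PowerSeries.coeff n f = 0

/-- `(u 1, …, u p)` is a solution of the escape-region equations of period `p`
(where `X` plays the role of `𝔱^{1/μ}`, i.e. of `ξ^{1/μ}` with `ξ = 1/(3a)`):
`u p = 0` and `X^{2μ}(u_{j+1} − u₁) = u_j²(u_j − 1)` for `1 ≤ j < p`. -/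
def IsEscapeSolution (p μ : ℕ) (u : ℕ → PowerSeries ℂ) : Prop :=
  u p = 0 ∧ ∀ j, 1 ≤ j → j < p →
    (PowerSeries.X : PowerSeries ℂ) ^ (2 * μ) * (u (j + 1) - u 1)
      = (u j) ^ 2 * (u j - 1)

/-- The error `E_j(w) = X^{2μ}(w_{j+1} − w₁) − w_j²(w_j − 1)`. -/
noncomputable def Err (μ : ℕ) (w : ℕ → PowerSeries ℂ) (j : ℕ) : PowerSeries ℂ :=
  (PowerSeries.X : PowerSeries ℂ) ^ (2 * μ) * (w (j + 1) - w 1) - (w j) ^ 2 * (w j - 1)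


open Finset

noncomputable section TK
namespace TK

/-- Convolution of coefficient sequences. -/
def conv (b b' : ℕ → ℂ) (n : ℕ) : ℂ := ∑ k ∈ range (n+1), b k * b' (n - k)

/-- The even power series with `t`-coefficients `b` (i.e. `∑ b n X^{2n}`). -/
def Fser (b : ℕ → ℂ) : PowerSeries ℂ :=
  PowerSeries.mk fun m => if Even m then b (m / 2) else 0

lemma coeff_Fser_even (b : ℕ → ℂ) (n : ℕ) :
    PowerSeries.coeff (2*n) (Fser b) = b n := by
  simp [Fser]

lemma coeff_Fser_odd (b : ℕ → ℂ) (m : ℕ) (h : ¬ Even m) :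
    PowerSeries.coeff m (Fser b) = 0 := by
  simp [Fser, h]

lemma sum_range_double (g : ℕ → ℂ) (hg : ∀ k, ¬ Even k → g k = 0) (n : ℕ) :
    ∑ k ∈ range (2*n+1), g k = ∑ k ∈ range (n+1), g (2*k) := by
  induction n with
  | zero => simp
  | succ n ih =>
    have h1 : 2*(n+1)+1 = (2*n+1)+1+1 := by ring
    rw [h1, Finset.sum_range_succ, Finset.sum_range_succ, ih,
      hg (2*n+1) (by simp [Nat.even_iff]), add_zero,
      show 2*n+1+1 = 2*(n+1) by ring, Finset.sum_range_succ (fun k => g (2*k)) (n+1)]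

lemma Fser_mul (b b' : ℕ → ℂ) : Fser b * Fser b' = Fser (conv b b') := by
  ext m
  rw [PowerSeries.coeff_mul, Finset.Nat.sum_antidiagonal_eq_sum_range_succ_mk]
  dsimp only
  by_cases hm : Even m
  · obtain ⟨n, hn⟩ := hm
    have hm2 : m = 2*n := by omega
    subst hm2
    rw [coeff_Fser_even]
    have hz : ∀ k, ¬ Even k → (PowerSeries.coeff k) (Fser b) *
        (PowerSeries.coeff (2*n - k)) (Fser b') = 0 := fun k hk => by
      rw [coeff_Fser_odd b k hk, zero_mul]
    have h := sum_range_double (fun k => (PowerSeries.coeff k) (Fser b) *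
      (PowerSeries.coeff (2*n - k)) (Fser b')) hz n
    rw [h]
    unfold conv
    apply Finset.sum_congr rfl
    intro k hk
    simp only [Finset.mem_range] at hk
    have h2 : 2*n - 2*k = 2*(n-k) := by omega
    rw [h2, coeff_Fser_even, coeff_Fser_even]
  · rw [coeff_Fser_odd _ _ hm]
    apply Finset.sum_eq_zero
    intro k hk
    simp only [Finset.mem_range] at hk
    by_cases hk2 : Even k
    · rw [coeff_Fser_odd b' (m-k) (by simp [Nat.even_iff] at *; omega), mul_zero]
    · rw [coeff_Fser_odd b k hk2, zero_mul]

lemma Fser_inj {d e : ℕ → ℂ} (h : Fser d = Fser e) : d = e := by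
  funext n
  rw [← coeff_Fser_even d n, ← coeff_Fser_even e n, h]

lemma Fser_sub (d e : ℕ → ℂ) : Fser d - Fser e = Fser (fun n => d n - e n) := by
  ext m
  simp only [map_sub, Fser, PowerSeries.coeff_mk]
  split <;> simp

lemma Fser_one : (1 : PowerSeries ℂ) = Fser (fun n => if n = 0 then 1 else 0) := by
  ext m
  simp only [PowerSeries.coeff_one, Fser, PowerSeries.coeff_mk]
  rcases Nat.even_or_odd m with h | h
  · obtain ⟨r, hr⟩ := h
    have he : Even m := ⟨r, hr⟩
    rw [if_pos he]
    by_cases h0 : m = 0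
    · subst h0; simp
    · rw [if_neg h0, if_neg (by omega : ¬ m/2 = 0)]
  · obtain ⟨r, hr⟩ := h
    rw [if_neg (by omega : ¬ m = 0), if_neg (by simp [Nat.even_iff]; omega)]

lemma X_sq : (PowerSeries.X : PowerSeries ℂ)^2 = Fser (fun n => if n = 1 then 1 else 0) := by
  ext m
  rw [PowerSeries.coeff_X_pow]
  simp only [Fser, PowerSeries.coeff_mk]
  rcases Nat.even_or_odd m with h | h
  · obtain ⟨r, hr⟩ := h
    have he : Even m := ⟨r, hr⟩
    rw [if_pos he]
    by_cases h2 : m = 2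
    · subst h2; norm_num
    · rw [if_neg h2, if_neg (by omega : ¬ m/2 = 1)]
  · obtain ⟨r, hr⟩ := h
    rw [if_neg (by omega : ¬ m = 2), if_neg (by simp [Nat.even_iff]; omega)]

def Acoef (c : ℕ → ℂ) : ℕ → ℂ
  | 0 => 0
  | 1 => 1
  | (j+2) => 1 + 2 * c (j+1) * Acoef c (j+1)

def Bcoef (c : ℕ → ℂ) (r : ℕ → ℂ) : ℕ → ℂ
  | 0 => 0
  | 1 => 0
  | (j+2) => 2 * c (j+1) * Bcoef c r (j+1) + r (j+1)

def S2v (b : ℕ → ℂ) (N : ℕ) : ℂ := ∑ k ∈ Ico 2 N, b k * b (N+1-k)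

def S3v (b : ℕ → ℂ) (N : ℕ) : ℂ :=
  ∑ m ∈ Ico 2 (N+1), (∑ i ∈ Ico 1 m, b i * b (m-i)) * b (N+1-m)

def rfun (t : ℕ → ℂ) (N : ℕ) : ℂ := S3v t N - S2v t N

lemma rfun_congr {t t' : ℕ → ℂ} {N : ℕ} (h : ∀ m < N, t m = t' m) :
    rfun t N = rfun t' N := by
  unfold rfun S3v S2v
  congr 1
  · apply Finset.sum_congr rfl
    intro m hm
    simp only [Finset.mem_Ico] at hm
    rw [h (N+1-m) (by omega)]
    congr 1
    apply Finset.sum_congr rfl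
    intro i hi
    simp only [Finset.mem_Ico] at hi
    rw [h i (by omega), h (m-i) (by omega)]
  · apply Finset.sum_congr rfl
    intro k hk
    simp only [Finset.mem_Ico] at hk
    rw [h k (by omega), h (N+1-k) (by omega)]

def levs (p : ℕ) (c : ℕ → ℂ) : ℕ → ℕ → ℕ → ℂ
  | 0 => fun _ _ => 0
  | 1 => fun m j => if m = 1 then -(c j) else 0
  | (n+2) => fun m j =>
      if m ≤ n+1 then levs p c (n+1) m j
      else
        Acoef c j *
            (-(Bcoef c (fun j' => rfun (fun m' => levs p c (n+1) m' j') (n+2)) p)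
              / Acoef c p)
          + Bcoef c (fun j' => rfun (fun m' => levs p c (n+1) m' j') (n+2)) j

/-- `acoef p c n j` : the `t^n`-coefficient of `u_j` (with `t = X²`). -/
def acoef (p : ℕ) (c : ℕ → ℂ) (n j : ℕ) : ℂ := levs p c n n j

lemma levs_succ_succ_le (p : ℕ) (c : ℕ → ℂ) (n m j : ℕ) (h : m ≤ n+1) :
    levs p c (n+2) m j = levs p c (n+1) m j := by
  conv_lhs => rw [levs]
  simp only []
  rw [if_pos h]

lemma levs_eq (p : ℕ) (c : ℕ → ℂ) : ∀ n m j, m ≤ n → levs p c n m j = acoef p c m j := by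
  intro n
  induction n with
  | zero => intro m j hm; interval_cases m; rfl
  | succ n ih =>
    intro m j hm
    rcases Nat.lt_or_ge m (n+1) with h | h
    · have hm' : m ≤ n := by omega
      rw [← ih m j hm']
      match n, hm' with
      | 0, hm' => interval_cases m; simp [levs]
      | (n'+1), hm' => exact levs_succ_succ_le p c n' m j (by omega)
    · have : m = n+1 := by omega
      subst this
      rfl

/-- The inhomogeneous term at level `N` for orbit index `j`. -/
def Rr (p : ℕ) (c : ℕ → ℂ) (N : ℕ) : ℕ → ℂ :=
  fun j => rfun (fun m => acoef p c m j) N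

/-- The level-`N` value of `a_{1,N}` (the solved unknown). -/
def xval (p : ℕ) (c : ℕ → ℂ) (N : ℕ) : ℂ :=
  -(Bcoef c (Rr p c N) p) / Acoef c p

lemma acoef_zero (p : ℕ) (c : ℕ → ℂ) (j : ℕ) : acoef p c 0 j = 0 := rfl

lemma acoef_one (p : ℕ) (c : ℕ → ℂ) (j : ℕ) : acoef p c 1 j = -(c j) := by
  show levs p c 1 1 j = _
  simp [levs]

lemma acoef_succ_succ (p : ℕ) (c : ℕ → ℂ) (n j : ℕ) :
    acoef p c (n+2) j = Acoef c j * xval p c (n+2) + Bcoef c (Rr p c (n+2)) j := by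
  show levs p c (n+2) (n+2) j = _
  unfold levs
  rw [if_neg (by omega : ¬ n+2 ≤ n+1)]
  have hB : (fun j' => rfun (fun m' => levs p c (n+1) m' j') (n+2)) = Rr p c (n+2) := by
    funext j'
    apply rfun_congr
    intro m hm
    exact levs_eq p c (n+1) m j' (by omega)
  rw [hB]
  rfl
lemma acoef_x (p : ℕ) (c : ℕ → ℂ) (n : ℕ) : acoef p c (n+2) 1 = xval p c (n+2) := by
  rw [acoef_succ_succ]
  show Acoef c 1 * _ + Bcoef c _ 1 = _
  rw [show Acoef c 1 = 1 from rfl, show ∀ r, Bcoef c r 1 = 0 from fun r => rfl]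
  ring

lemma acoef_p_eq_zero (p : ℕ) (c : ℕ → ℂ) (hcp : c p = 0) (hA : Acoef c p ≠ 0) :
    ∀ n, acoef p c n p = 0 := by
  intro n
  match n with
  | 0 => rfl
  | 1 => rw [acoef_one, hcp, neg_zero]
  | (n+2) =>
    rw [acoef_succ_succ, xval]
    field_simp
    ring

lemma acoef_rec (p : ℕ) (c : ℕ → ℂ) (n j : ℕ) (hj : 1 ≤ j) :
    acoef p c (n+2) (j+1)
      = acoef p c (n+2) 1 + 2 * c j * acoef p c (n+2) j + Rr p c (n+2) j := by
  obtain ⟨j', rfl⟩ : ∃ j', j = j'+1 := ⟨j-1, by omega⟩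
  rw [acoef_succ_succ p c n (j'+1+1), acoef_x p c n, acoef_succ_succ p c n (j'+1)]
  show Acoef c (j'+2) * _ + Bcoef c _ (j'+2) = _
  rw [show Acoef c (j'+2) = 1 + 2 * c (j'+1) * Acoef c (j'+1) from rfl,
    show ∀ r, Bcoef c r (j'+2) = 2 * c (j'+1) * Bcoef c r (j'+1) + r (j'+1) from fun r => rfl]
  ring

lemma conv_restrict (b : ℕ → ℂ) (hb : b 0 = 0) (m : ℕ) :
    conv b b m = ∑ i ∈ Ico 1 m, b i * b (m-i) := by
  unfold conv
  symm
  apply Finset.sum_subset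
  · intro x hx
    simp only [Finset.mem_Ico, Finset.mem_range] at *
    omega
  · intro x hx hx'
    simp only [Finset.mem_Ico, Finset.mem_range] at hx hx'
    have : x = 0 ∨ x = m := by omega
    rcases this with h | h <;> subst h
    · rw [hb, zero_mul]
    · rw [Nat.sub_self, hb, mul_zero]

lemma conv2_expand (b : ℕ → ℂ) (hb : b 0 = 0) (N : ℕ) (hN : 2 ≤ N) :
    conv b b (N+1) = 2*(b 1 * b N) + S2v b N := by
  rw [conv_restrict b hb]
  have hset : Ico 1 (N+1) = insert 1 (insert N (Ico 2 N)) := by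
    ext x
    simp only [Finset.mem_Ico, Finset.mem_insert]
    omega
  rw [hset, Finset.sum_insert (by simp only [Finset.mem_insert, Finset.mem_Ico]; omega),
    Finset.sum_insert (by simp only [Finset.mem_Ico]; omega),
    show N+1-1 = N from by omega, show N+1-N = 1 from by omega]
  unfold S2v
  ring

lemma conv3_expand (b : ℕ → ℂ) (hb : b 0 = 0) (N : ℕ) :
    conv (conv b b) b (N+1) = S3v b N := by
  rw [show conv (conv b b) b (N+1)
      = ∑ m ∈ range (N+1+1), conv b b m * b (N+1-m) from rfl]
  unfold S3v
  rw [Finset.sum_congr rfl (fun m _ => by rw [conv_restrict b hb] :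
    ∀ m ∈ range (N+1+1), conv b b m * b (N+1-m)
      = (∑ i ∈ Ico 1 m, b i * b (m-i)) * b (N+1-m))]
  symm
  apply Finset.sum_subset
  · intro x hx
    simp only [Finset.mem_Ico, Finset.mem_range] at *
    omega
  · intro x hx hx'
    simp only [Finset.mem_Ico, Finset.mem_range] at hx hx'
    rcases (by omega : x ≤ 1 ∨ x = N+1) with h | h
    · rw [Finset.Ico_eq_empty (by omega), Finset.sum_empty, zero_mul]
    · subst h
      rw [Nat.sub_self, hb, mul_zero]

lemma conv_e1 (d : ℕ → ℂ) (n : ℕ) :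
    conv (fun k => if k = 1 then (1:ℂ) else 0) d n = if n = 0 then 0 else d (n-1) := by
  cases n with
  | zero => simp [conv]
  | succ N =>
    rw [if_neg (by omega : ¬ N+1 = 0)]
    unfold conv
    rw [Finset.sum_eq_single_of_mem 1 (by simp only [Finset.mem_range]; omega)
      (fun k _ hk => by simp [hk])]
    simp

lemma key_iff (w w1 b : ℕ → ℂ) (hb : b 0 = 0) :
    (PowerSeries.X : PowerSeries ℂ)^2 * (Fser w - Fser w1) = (Fser b)^2 * (Fser b - 1) ↔
    ∀ N, w N - w1 N = conv (conv b b) b (N+1) - conv b b (N+1) := by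
  have hL : (PowerSeries.X : PowerSeries ℂ)^2 * (Fser w - Fser w1)
      = Fser (fun n => if n = 0 then 0 else (w (n-1) - w1 (n-1))) := by
    rw [X_sq, Fser_sub, Fser_mul]
    refine congrArg Fser (funext fun n => ?_)
    rw [conv_e1]
  have hR : (Fser b)^2 * (Fser b - 1)
      = Fser (fun n => conv (conv b b) b n - conv b b n) := by
    have h1 : (Fser b)^2 * (Fser b - 1) = Fser b * Fser b * Fser b - Fser b * Fser b := by
      ring
    rw [h1, Fser_mul, Fser_mul, Fser_sub]
  rw [hL, hR]
  constructor
  · intro h N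
    have := congrFun (Fser_inj h) (N+1)
    simpa using this
  · intro h
    refine congrArg Fser (funext fun n => ?_)
    cases n with
    | zero => simp [conv, hb]
    | succ N => simpa using h N
/-- The integer polynomials `Q j` with `Q j (c 1) = c j` along the orbit. -/
def orbPoly : ℕ → Polynomial ℤ
  | 0 => 0
  | 1 => Polynomial.X
  | (j+2) => (orbPoly (j+1))^2 + Polynomial.X

lemma orbPoly_monic : ∀ j, 1 ≤ j → (orbPoly j).Monic ∧ 1 ≤ (orbPoly j).natDegree := by
  intro j hj
  induction j with
  | zero => omega
  | succ j ih =>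
    match j with
    | 0 =>
      constructor
      · exact Polynomial.monic_X
      · simp [orbPoly]
    | (j'+1) =>
      obtain ⟨hm, hd⟩ := ih (by omega)
      have hmsq : ((orbPoly (j'+1))^2).Monic := hm.pow 2
      have hdeg : ((orbPoly (j'+1))^2).natDegree = 2 * (orbPoly (j'+1)).natDegree := by
        rw [Polynomial.natDegree_pow]
      have hlt : (Polynomial.X : Polynomial ℤ).degree < ((orbPoly (j'+1))^2).degree := by
        rw [Polynomial.degree_X, Polynomial.degree_eq_natDegree hmsq.ne_zero, hdeg]
        exact_mod_cast (by omega : 1 < 2 * (orbPoly (j'+1)).natDegree)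
      constructor
      · show ((orbPoly (j'+1))^2 + Polynomial.X).Monic
        exact hmsq.add_of_left hlt
      · show 1 ≤ ((orbPoly (j'+1))^2 + Polynomial.X).natDegree
        have hde : ((orbPoly (j'+1))^2 + Polynomial.X).degree
            = ((2 * (orbPoly (j'+1)).natDegree : ℕ) : WithBot ℕ) := by
          rw [Polynomial.degree_add_eq_left_of_degree_lt hlt,
            Polynomial.degree_eq_natDegree hmsq.ne_zero, hdeg]
        rw [Polynomial.natDegree_eq_of_degree_eq_some hde]
        omega

lemma c_one_integral (p : ℕ) (c : ℕ → ℂ) (hp : 2 ≤ p) (hcp : c p = 0)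
    (hc : ∀ j, 1 ≤ j → j < p → c (j + 1) = (c j) ^ 2 + c 1) :
    IsIntegral ℤ (c 1) := by
  have heval : ∀ j, 1 ≤ j → j ≤ p → Polynomial.aeval (c 1) (orbPoly j) = c j := by
    intro j hj hjp
    induction j with
    | zero => omega
    | succ j ih =>
      match j with
      | 0 => simp [orbPoly]
      | (j'+1) =>
        have h1 : Polynomial.aeval (c 1) (orbPoly (j'+1)) = c (j'+1) :=
          ih (by omega) (by omega)
        show Polynomial.aeval (c 1) ((orbPoly (j'+1))^2 + Polynomial.X) = c (j'+2)
        rw [map_add, map_pow, h1, Polynomial.aeval_X, hc (j'+1) (by omega) (by omega)]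
  exact ⟨orbPoly p, (orbPoly_monic p (by omega)).1, by
    rw [← Polynomial.aeval_def, heval p (by omega) le_rfl, hcp]⟩

lemma neg_half_not_integral : ¬ IsIntegral ℤ ((-(1/2) : ℂ)) := by
  intro h
  have h1 : ((-(1/2) : ℚ) : ℂ) = -(1/2) := by norm_num
  have h2 : IsIntegral ℤ ((-(1/2) : ℚ)) := by
    have := (isIntegral_algebraMap_iff
      (algebraMap ℚ ℂ).injective (R := ℤ) (x := (-(1/2) : ℚ))).mp ?_
    · exact this
    · show IsIntegral ℤ (algebraMap ℚ ℂ (-(1/2) : ℚ))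
      have : algebraMap ℚ ℂ (-(1/2) : ℚ) = ((-(1/2) : ℚ) : ℂ) := rfl
      rw [this, h1]
      exact h
  obtain ⟨y, hy⟩ := IsIntegrallyClosed.isIntegral_iff.mp h2
  have : (y : ℚ) = -(1/2) := by exact_mod_cast hy
  have h3 : ((2*y : ℤ) : ℚ) = ((-1 : ℤ) : ℚ) := by push_cast; rw [this]; ring
  have := Int.cast_injective h3
  omega

lemma Acoef_ne_zero (p : ℕ) (c : ℕ → ℂ) (hp : 1 ≤ p) (hcp : c p = 0)
    (hc : ∀ j, 1 ≤ j → j < p → c (j + 1) = (c j) ^ 2 + c 1) :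
    Acoef c p ≠ 0 := by
  match p, hp with
  | 1, _ => show (1 : ℂ) ≠ 0; exact one_ne_zero
  | (q+2), _ =>
    set p := q+2 with hpdef
    have hint : IsIntegral ℤ (c 1) := c_one_integral p c (by omega) hcp hc
    set T := integralClosure ℤ ℂ with hT
    have hc1T : c 1 ∈ T := hint
    have hcT : ∀ j, 1 ≤ j → j ≤ p → c j ∈ T := by
      intro j hj hjp
      induction j with
      | zero => omega
      | succ j ih =>
        match j with
        | 0 => exact hc1T
        | (j'+1) =>
          rw [hc (j'+1) (by omega) (by omega)]
          exact add_mem (pow_mem (ih (by omega) (by omega)) 2) hc1T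
    have hAT : ∀ j, j ≤ p → Acoef c j ∈ T := by
      intro j hjp
      induction j with
      | zero => exact zero_mem T
      | succ j ih =>
        match j with
        | 0 => exact one_mem T
        | (j'+1) =>
          show (1 + 2 * c (j'+1) * Acoef c (j'+1) : ℂ) ∈ T
          exact add_mem (one_mem T)
            (mul_mem (mul_mem (by exact_mod_cast natCast_mem T 2 : (2:ℂ) ∈ T)
              (hcT (j'+1) (by omega) (by omega))) (ih (by omega)))
    intro h0
    have hform : Acoef c p = 1 + 2 * (c (q+1) * Acoef c (q+1)) := by
      show Acoef c (q+2) = _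
      rw [show Acoef c (q+2) = 1 + 2 * c (q+1) * Acoef c (q+1) from rfl]
      ring
    set β := c (q+1) * Acoef c (q+1) with hβ
    have hβT : β ∈ T := mul_mem (hcT (q+1) (by omega) (by omega)) (hAT (q+1) (by omega))
    have hβval : β = -(1/2) := by
      have : (1 : ℂ) + 2 * β = 0 := by rw [← hform]; exact h0
      linear_combination this / 2
    exact neg_half_not_integral (hβval ▸ hβT)
lemma Fser_zero : Fser (fun _ => (0:ℂ)) = 0 := by
  ext m
  simp [Fser]

lemma main_seq_identity (p : ℕ) (c : ℕ → ℂ) (hcp : c p = 0)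
    (hc : ∀ j, 1 ≤ j → j < p → c (j + 1) = (c j) ^ 2 + c 1)
    (hA : Acoef c p ≠ 0) (j : ℕ) (hj1 : 1 ≤ j) (hjp : j < p) (N : ℕ) :
    acoef p c N (j+1) - acoef p c N 1
      = conv (conv (fun n => acoef p c n j) (fun n => acoef p c n j))
          (fun n => acoef p c n j) (N+1)
        - conv (fun n => acoef p c n j) (fun n => acoef p c n j) (N+1) := by
  have hb0 : (fun n => acoef p c n j) 0 = 0 := acoef_zero p c j
  match N with
  | 0 =>
    rw [acoef_zero, acoef_zero]
    simp [conv, Finset.sum_range_succ, acoef_zero]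
  | 1 =>
    rw [acoef_one, acoef_one]
    have h2 : conv (fun n => acoef p c n j) (fun n => acoef p c n j) 2 = (c j)^2 := by
      simp [conv, Finset.sum_range_succ, acoef_zero, acoef_one]
      ring
    have h3 : conv (conv (fun n => acoef p c n j) (fun n => acoef p c n j))
        (fun n => acoef p c n j) 2 = 0 := by
      simp [conv, Finset.sum_range_succ, acoef_zero]
    rw [h2, h3, hc j hj1 hjp]
    ring
  | (n+2) =>
    rw [conv3_expand _ hb0 (n+2), conv2_expand _ hb0 (n+2) (by omega),
      acoef_rec p c n j hj1]
    have hRr : Rr p c (n+2) j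
        = S3v (fun n => acoef p c n j) (n+2) - S2v (fun n => acoef p c n j) (n+2) := rfl
    rw [hRr, acoef_one]
    ring

lemma unique_b (p : ℕ) (c : ℕ → ℂ) (hcp : c p = 0) (hA : Acoef c p ≠ 0)
    (b' : ℕ → ℕ → ℂ)
    (hb'0 : ∀ j, 1 ≤ j → j ≤ p → b' j 0 = 0)
    (hb'1 : ∀ j, 1 ≤ j → j ≤ p → b' j 1 = -(c j))
    (hb'p : ∀ n, b' p n = 0)
    (hrel : ∀ j, 1 ≤ j → j < p → ∀ N, b' (j+1) N - b' 1 N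
        = conv (conv (b' j) (b' j)) (b' j) (N+1) - conv (b' j) (b' j) (N+1)) :
    ∀ N j, 1 ≤ j → j ≤ p → b' j N = acoef p c N j := by
  have hp : 1 ≤ p := by
    by_contra h
    have : p = 0 := by omega
    subst this
    exact hA rfl
  intro N
  induction N using Nat.strong_induction_on with
  | _ N IH =>
    match N with
    | 0 => intro j hj hjp; rw [hb'0 j hj hjp, acoef_zero]
    | 1 => intro j hj hjp; rw [hb'1 j hj hjp, acoef_one]
    | (n+2) =>
      have hstep : ∀ j, 1 ≤ j → j < p →
          b' (j+1) (n+2) = b' 1 (n+2) + 2 * c j * b' j (n+2) + Rr p c (n+2) j := by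
        intro j hj hjp
        have h := hrel j hj hjp (n+2)
        rw [conv3_expand (b' j) (hb'0 j hj (le_of_lt hjp)) (n+2),
          conv2_expand (b' j) (hb'0 j hj (le_of_lt hjp)) (n+2) (by omega)] at h
        have hbm : ∀ m, m < n+2 → b' j m = acoef p c m j :=
          fun m hm => IH m hm j hj (le_of_lt hjp)
        have hrr : rfun (b' j) (n+2) = Rr p c (n+2) j := rfun_congr hbm
        have hrr' : S3v (b' j) (n+2) - S2v (b' j) (n+2) = Rr p c (n+2) j := hrr
        have hb1 : b' j 1 = -(c j) := hb'1 j hj (le_of_lt hjp)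
        linear_combination h + hrr' - 2 * b' j (n+2) * hb1
      have haff : ∀ j, 1 ≤ j → j ≤ p →
          b' j (n+2) = Acoef c j * b' 1 (n+2) + Bcoef c (Rr p c (n+2)) j := by
        intro j
        induction j with
        | zero => intro h; omega
        | succ j ihj =>
          intro hj hjp
          match j, ihj with
          | 0, _ =>
            rw [show Acoef c 1 = 1 from rfl, show Bcoef c (Rr p c (n+2)) 1 = 0 from rfl]
            ring
          | (j'+1), ihj =>
            rw [hstep (j'+1) (by omega) (by omega), ihj (by omega) (by omega),
              show Acoef c (j'+2) = 1 + 2*c (j'+1)*Acoef c (j'+1) from rfl,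
              show Bcoef c (Rr p c (n+2)) (j'+2)
                = 2*c (j'+1)*Bcoef c (Rr p c (n+2)) (j'+1) + Rr p c (n+2) (j'+1) from rfl]
            ring
      have hy : b' 1 (n+2) = xval p c (n+2) := by
        have h0 := haff p hp le_rfl
        rw [hb'p (n+2)] at h0
        rw [xval]
        field_simp
        linear_combination -h0
      intro j hj hjp
      rw [haff j hj hjp, hy]
      exact (acoef_succ_succ p c n j).symm

section Membership

variable (p : ℕ) (c : ℕ → ℂ)

lemma cK_mem (hc : ∀ j, 1 ≤ j → j < p → c (j + 1) = (c j) ^ 2 + c 1) :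
    ∀ j, 1 ≤ j → j ≤ p → c j ∈ Subfield.closure ({c 1} : Set ℂ) := by
  intro j
  induction j with
  | zero => intro h; omega
  | succ j ihj =>
    intro hj hjp
    match j, ihj with
    | 0, _ => exact Subfield.subset_closure rfl
    | (j'+1), ihj =>
      rw [hc (j'+1) (by omega) (by omega)]
      exact add_mem (pow_mem (ihj (by omega) (by omega)) 2)
        (Subfield.subset_closure rfl)

lemma AK_mem (hc : ∀ j, 1 ≤ j → j < p → c (j + 1) = (c j) ^ 2 + c 1) :
    ∀ j, j ≤ p → Acoef c j ∈ Subfield.closure ({c 1} : Set ℂ) := by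
  intro j
  induction j with
  | zero => intro _; exact zero_mem _
  | succ j ihj =>
    intro hjp
    match j, ihj with
    | 0, _ => exact one_mem _
    | (j'+1), ihj =>
      show (1 + 2 * c (j'+1) * Acoef c (j'+1) : ℂ) ∈ _
      refine add_mem (one_mem _) (mul_mem (mul_mem ?_ ?_) (ihj (by omega)))
      · exact_mod_cast natCast_mem (Subfield.closure ({c 1} : Set ℂ)) 2
      · exact cK_mem p c hc (j'+1) (by omega) (by omega)

lemma BK_mem (hc : ∀ j, 1 ≤ j → j < p → c (j + 1) = (c j) ^ 2 + c 1)
    (r : ℕ → ℂ) (hr : ∀ j', 1 ≤ j' → j' < p → r j' ∈ Subfield.closure ({c 1} : Set ℂ)) :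
    ∀ j, j ≤ p → Bcoef c r j ∈ Subfield.closure ({c 1} : Set ℂ) := by
  intro j
  induction j with
  | zero => intro _; exact zero_mem _
  | succ j ihj =>
    intro hjp
    match j, ihj with
    | 0, _ => exact zero_mem _
    | (j'+1), ihj =>
      show (2 * c (j'+1) * Bcoef c r (j'+1) + r (j'+1) : ℂ) ∈ _
      refine add_mem (mul_mem (mul_mem ?_ ?_) (ihj (by omega))) (hr (j'+1) (by omega) (by omega))
      · exact_mod_cast natCast_mem (Subfield.closure ({c 1} : Set ℂ)) 2
      · exact cK_mem p c hc (j'+1) (by omega) (by omega)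

lemma aK_mem (hc : ∀ j, 1 ≤ j → j < p → c (j + 1) = (c j) ^ 2 + c 1) :
    ∀ N j, 1 ≤ j → j ≤ p → acoef p c N j ∈ Subfield.closure ({c 1} : Set ℂ) := by
  intro N
  induction N using Nat.strong_induction_on with
  | _ N IH =>
    match N with
    | 0 => intro j hj hjp; exact zero_mem _
    | 1 =>
      intro j hj hjp
      rw [acoef_one]
      exact neg_mem (cK_mem p c hc j hj hjp)
    | (n+2) =>
      have hrK : ∀ j', 1 ≤ j' → j' < p →
          Rr p c (n+2) j' ∈ Subfield.closure ({c 1} : Set ℂ) := by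
        intro j' hj' hjp'
        have hidx : ∀ m, m < n+2 → acoef p c m j' ∈ Subfield.closure ({c 1} : Set ℂ) :=
          fun m hm => IH m hm j' hj' (le_of_lt hjp')
        show S3v (fun m => acoef p c m j') (n+2) - S2v (fun m => acoef p c m j') (n+2)
            ∈ Subfield.closure ({c 1} : Set ℂ)
        unfold S3v S2v
        refine sub_mem (sum_mem ?_) (sum_mem ?_)
        · intro m hm
          simp only [Finset.mem_Ico] at hm
          refine mul_mem (sum_mem ?_) (hidx (n+2+1-m) (by omega))
          intro i hi
          simp only [Finset.mem_Ico] at hi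
          exact mul_mem (hidx i (by omega)) (hidx (m-i) (by omega))
        · intro k hk
          simp only [Finset.mem_Ico] at hk
          exact mul_mem (hidx k (by omega)) (hidx (n+2+1-k) (by omega))
      intro j hj hjp
      rw [acoef_succ_succ]
      refine add_mem (mul_mem (AK_mem p c hc j hjp) ?_) (BK_mem p c hc _ hrK j hjp)
      rw [xval]
      exact div_mem (neg_mem (BK_mem p c hc _ hrK p le_rfl)) (AK_mem p c hc p le_rfl)

end Membership
end TK
end TK

/-- **Existence and uniqueness for trivial kneading sequence.** Given a period-`p`
critical orbit `0 ↦ c₁ ↦ ⋯ ↦ c_{p−1} ↦ 0` of `z ↦ z² + c₁` (with `c_p = 0`), and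
taking `μ = 1`, there is exactly one solution `(u₁,…,u_p)` of the escape-region
equations such that each `u_j` is a power series in `X²` with
`u_j ≡ −c_j·X² (mod X⁴)`; moreover every coefficient of every `u_j` lies in the
smallest subfield `ℚ(c₁) ⊆ ℂ` containing `c₁`. -/
theorem trivial_kneading_exists_unique (p : ℕ) (hp : 1 ≤ p)
    (c : ℕ → ℂ) (hcp : c p = 0)
    (hc : ∀ j, 1 ≤ j → j < p → c (j + 1) = (c j) ^ 2 + c 1) :
    ∃ u : ℕ → PowerSeries ℂ,
      (IsEscapeSolution p 1 u ∧
        ∀ j, 1 ≤ j → j < p →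
          (∀ n : ℕ, Odd n → PowerSeries.coeff n (u j) = 0) ∧
          PowerSeries.coeff 0 (u j) = 0 ∧
          PowerSeries.coeff 1 (u j) = 0 ∧
          PowerSeries.coeff 2 (u j) = -(c j) ∧
          PowerSeries.coeff 3 (u j) = 0) ∧
      (∀ u' : ℕ → PowerSeries ℂ,
        (IsEscapeSolution p 1 u' ∧
          ∀ j, 1 ≤ j → j < p →
            (∀ n : ℕ, Odd n → PowerSeries.coeff n (u' j) = 0) ∧
            PowerSeries.coeff 0 (u' j) = 0 ∧
            PowerSeries.coeff 1 (u' j) = 0 ∧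
            PowerSeries.coeff 2 (u' j) = -(c j) ∧
            PowerSeries.coeff 3 (u' j) = 0) →
        ∀ j, 1 ≤ j → j ≤ p → u' j = u j) ∧
      (∀ j, 1 ≤ j → j ≤ p → ∀ n : ℕ,
        PowerSeries.coeff n (u j) ∈ Subfield.closure {c 1}) := by
  classical
  have hA : TK.Acoef c p ≠ 0 := TK.Acoef_ne_zero p c hp hcp hc
  refine ⟨fun j => TK.Fser (fun n => TK.acoef p c n j), ⟨⟨?_, ?_⟩, ?_⟩, ?_, ?_⟩
  · -- u p = 0
    show TK.Fser (fun n => TK.acoef p c n p) = 0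
    rw [show (fun n => TK.acoef p c n p) = (fun _ => (0:ℂ)) from
      funext (TK.acoef_p_eq_zero p c hcp hA)]
    exact TK.Fser_zero
  · -- the equations
    intro j hj hjp
    show (PowerSeries.X : PowerSeries ℂ)^(2*1) *
        (TK.Fser (fun n => TK.acoef p c n (j+1)) - TK.Fser (fun n => TK.acoef p c n 1))
      = (TK.Fser (fun n => TK.acoef p c n j))^2 * (TK.Fser (fun n => TK.acoef p c n j) - 1)
    rw [show 2*1 = 2 from rfl]
    exact (TK.key_iff _ _ _ (TK.acoef_zero p c j)).mpr
      (TK.main_seq_identity p c hcp hc hA j hj hjp)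
  · -- coefficient normalization
    intro j hj hjp
    show (∀ n : ℕ, Odd n → PowerSeries.coeff n (TK.Fser (fun n => TK.acoef p c n j)) = 0) ∧
      PowerSeries.coeff 0 (TK.Fser (fun n => TK.acoef p c n j)) = 0 ∧
      PowerSeries.coeff 1 (TK.Fser (fun n => TK.acoef p c n j)) = 0 ∧
      PowerSeries.coeff 2 (TK.Fser (fun n => TK.acoef p c n j)) = -(c j) ∧
      PowerSeries.coeff 3 (TK.Fser (fun n => TK.acoef p c n j)) = 0
    refine ⟨?_, ?_, ?_, ?_, ?_⟩
    · intro n hn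
      exact TK.coeff_Fser_odd _ n (by simpa [Nat.not_even_iff_odd] using hn)
    · simpa [TK.acoef_zero] using TK.coeff_Fser_even (fun n => TK.acoef p c n j) 0
    · exact TK.coeff_Fser_odd _ 1 (by decide)
    · simpa [TK.acoef_one] using TK.coeff_Fser_even (fun n => TK.acoef p c n j) 1
    · exact TK.coeff_Fser_odd _ 3 (by decide)
  · -- uniqueness
    rintro u' ⟨⟨hu'p, hu'eq⟩, hu'c⟩ j hj hjp
    set b' : ℕ → ℕ → ℂ := fun j n => PowerSeries.coeff (2*n) (u' j) with hb'def
    have hb'p : ∀ n, b' p n = 0 := by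
      intro n
      simp [hb'def, hu'p]
    have hFser : ∀ j, 1 ≤ j → j ≤ p → u' j = TK.Fser (b' j) := by
      intro j hj hjp
      ext m
      by_cases hm : Even m
      · rw [show m = 2*(m/2) from by obtain ⟨r, hr⟩ := hm; omega,
          TK.coeff_Fser_even]
      · rw [TK.coeff_Fser_odd _ _ hm]
        rcases eq_or_lt_of_le hjp with rfl | hlt
        · rw [hu'p]
          simp
        · exact (hu'c j hj hlt).1 m (Nat.not_even_iff_odd.mp hm)
    have hb'0 : ∀ j, 1 ≤ j → j ≤ p → b' j 0 = 0 := by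
      intro j hj hjp
      rcases eq_or_lt_of_le hjp with rfl | hlt
      · exact hb'p 0
      · simpa [hb'def] using (hu'c j hj hlt).2.1
    have hb'1 : ∀ j, 1 ≤ j → j ≤ p → b' j 1 = -(c j) := by
      intro j hj hjp
      rcases eq_or_lt_of_le hjp with rfl | hlt
      · rw [hb'p 1, hcp, neg_zero]
      · simpa [hb'def] using (hu'c j hj hlt).2.2.2.1
    have hrel : ∀ j, 1 ≤ j → j < p → ∀ N, b' (j+1) N - b' 1 N
        = TK.conv (TK.conv (b' j) (b' j)) (b' j) (N+1)
          - TK.conv (b' j) (b' j) (N+1) := by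
      intro j hj hjp
      have h := hu'eq j hj hjp
      rw [show 2*1 = 2 from rfl, hFser (j+1) (by omega) (by omega),
        hFser 1 le_rfl hp, hFser j hj (le_of_lt hjp)] at h
      exact (TK.key_iff _ _ _ (hb'0 j hj (le_of_lt hjp))).mp h
    have := TK.unique_b p c hcp hA b' hb'0 hb'1 hb'p hrel
    show u' j = TK.Fser (fun n => TK.acoef p c n j)
    rw [hFser j hj hjp]
    exact congrArg TK.Fser (funext fun n => this n j hj hjp)
  · -- subfield membership
    intro j hj hjp n
    show PowerSeries.coeff n (TK.Fser (fun n => TK.acoef p c n j)) ∈ Subfield.closure {c 1}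
    by_cases hn : Even n
    · rw [show n = 2*(n/2) from by obtain ⟨r, hr⟩ := hn; omega, TK.coeff_Fser_even]
      exact TK.aK_mem p c hc (n/2) j hj hjp
    · rw [TK.coeff_Fser_odd _ _ hn]
      exact zero_mem _
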